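/- (Direct implication of the first identification condition.) Let Z ∈ ℝ^{n×n} and U, V ∈ ℝ^{n×r} with UᵀU = VᵀV = I_r. Suppose ‖ZV‖_F² + ‖ZᵀU‖_F² ≤ (1 − η)‖Z‖_F² for some 0 < η ≤ 1. Let P_{T⊥}(Z) := (I − UUᵀ)Z(I − VVᵀ). Then ‖UᵀZV‖_F² ≤ ‖P_{T⊥}(Z)‖_F² − η‖Z‖_F². Consequently, ‖P_{T⊥}(Z)‖_F² ≥ η‖Z‖_F² and ‖UᵀZV‖_F ≤ (1 − η/2)‖P_{T⊥}(Z)‖_F. -/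

import Mathlib

noncomputable section
open Matrix MeasureTheory

namespace Paper

/-- Frobenius (trace) inner product `⟨A,B⟩ = tr(Aᵀ B)`. -/
def finner {m k : Type*} [Fintype m] [Fintype k] (A B : Matrix m k ℝ) : ℝ :=
  Matrix.trace (Aᵀ * B)

/-- Frobenius norm `‖A‖_F`. -/
def fnorm {m k : Type*} [Fintype m] [Fintype k] (A : Matrix m k ℝ) : ℝ :=
  Real.sqrt (finner A A)

/-- Entrywise max norm `‖A‖_∞`. -/
def infNorm {m k : Type*} [Fintype m] [Fintype k] (A : Matrix m k ℝ) : ℝ :=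
  ⨆ i, ⨆ j, |A i j|

/-- Maximum row ℓ₂-norm `‖A‖_{2,∞}`. -/
def rowNorm {m k : Type*} [Fintype m] [Fintype k] (A : Matrix m k ℝ) : ℝ :=
  ⨆ i, Real.sqrt (∑ j, A i j ^ 2)

/-- The (unordered) singular values of a real matrix: the square roots of the
eigenvalues of `Aᴴ * A`. -/
def svals {m k : Type*} [Fintype m] [Fintype k] [DecidableEq k] (A : Matrix m k ℝ) : k → ℝ :=
  fun j => Real.sqrt ((Matrix.isHermitian_conjTranspose_mul_self A).eigenvalues j)

/-- Spectral (ℓ₂ operator) norm: the largest singular value. -/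
def specNorm {m k : Type*} [Fintype m] [Fintype k] [DecidableEq k] (A : Matrix m k ℝ) : ℝ :=
  ⨆ j, svals A j

/-- Nuclear norm `‖A‖_*`: the sum of the singular values. -/
def nucNorm {m k : Type*} [Fintype m] [Fintype k] [DecidableEq k] (A : Matrix m k ℝ) : ℝ :=
  ∑ j, svals A j

/-- The `i`-th largest singular value (singular values in descending order). -/
def svalDesc {m k : ℕ} (A : Matrix (Fin m) (Fin k) ℝ) (i : Fin k) : ℝ :=
  svals A (Tuple.sort (svals A) i.rev)

/-- Projection onto the orthogonal complement of the tangent space determined by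
matrices `U, V` with orthonormal columns: `P_{T⊥}(A) = (I − UUᵀ)A(I − VVᵀ)`. -/
def PTperp {n r : Type*} [Fintype n] [Fintype r] [DecidableEq n]
    (U V : Matrix n r ℝ) (A : Matrix n n ℝ) : Matrix n n ℝ :=
  (1 - U * Uᵀ) * A * (1 - V * Vᵀ)

/-- Projection onto the tangent space: `P_T(A) = A − P_{T⊥}(A)`. -/
def PTang {n r : Type*} [Fintype n] [Fintype r] [DecidableEq n]
    (U V : Matrix n r ℝ) (A : Matrix n n ℝ) : Matrix n n ℝ :=
  A - PTperp U V A

/-- Rank-one versions of the tangent space projections, built from unit vectors. -/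
def PTperpVec {n : Type*} [Fintype n] [DecidableEq n]
    (u v : n → ℝ) (A : Matrix n n ℝ) : Matrix n n ℝ :=
  (1 - Matrix.vecMulVec u u) * A * (1 - Matrix.vecMulVec v v)

def PTangVec {n : Type*} [Fintype n] [DecidableEq n]
    (u v : n → ℝ) (A : Matrix n n ℝ) : Matrix n n ℝ :=
  A - PTperpVec u v A

/-- A `{0,1}`-valued (treatment) matrix. -/
def IsBinary {n : Type*} (Z : Matrix n n ℝ) : Prop := ∀ i j, Z i j = 0 ∨ Z i j = 1

/-- Sub-Gaussian with ψ₂-Orlicz norm at most `σ`: `E exp((X/σ)²) ≤ 2`. -/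
def SubGaussianLe {Ω : Type*} [MeasurableSpace Ω] (μ : Measure Ω) (X : Ω → ℝ) (σ : ℝ) : Prop :=
  ∫ ω, Real.exp ((X ω / σ) ^ 2) ∂μ ≤ 2

/-- A compact singular value decomposition `M = U (diag s) Vᵀ` with orthonormal columns
and strictly positive singular values. -/
def IsCompactSVD {n r : ℕ} (M : Matrix (Fin n) (Fin n) ℝ)
    (U : Matrix (Fin n) (Fin r) ℝ) (s : Fin r → ℝ) (V : Matrix (Fin n) (Fin r) ℝ) : Prop :=
  Uᵀ * U = 1 ∧ Vᵀ * V = 1 ∧ (∀ i, 0 < s i) ∧ M = U * Matrix.diagonal s * Vᵀ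

/-- Objective of the convex program `g(M, τ)`. -/
def gval {n : ℕ} (O Z : Matrix (Fin n) (Fin n) ℝ) (lam : ℝ)
    (M : Matrix (Fin n) (Fin n) ℝ) (τ : ℝ) : ℝ :=
  1 / 2 * fnorm (O - M - τ • Z) ^ 2 + lam * nucNorm M

/-- `τ(X,Y) = ⟨Z, O − XYᵀ⟩ / ‖Z‖_F²`. -/
def tauOf {n r : ℕ} (Z O : Matrix (Fin n) (Fin n) ℝ)
    (X Y : Matrix (Fin n) (Fin r) ℝ) : ℝ :=
  finner Z (O - X * Yᵀ) / fnorm Z ^ 2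

/-- `∇_X f(X,Y;τ)`. -/
def gradX {n r : ℕ} (Z O : Matrix (Fin n) (Fin n) ℝ) (lam : ℝ)
    (X Y : Matrix (Fin n) (Fin r) ℝ) (τ : ℝ) : Matrix (Fin n) (Fin r) ℝ :=
  (X * Yᵀ + τ • Z - O) * Y + lam • X

/-- `∇_Y f(X,Y;τ)`. -/
def gradY {n r : ℕ} (Z O : Matrix (Fin n) (Fin n) ℝ) (lam : ℝ)
    (X Y : Matrix (Fin n) (Fin r) ℝ) (τ : ℝ) : Matrix (Fin n) (Fin r) ℝ :=
  (X * Yᵀ + τ • Z - O)ᵀ * X + lam • Y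

/-- `∇f(X,Y;τ) ∈ ℝ^{2n×r}`: the vertical stacking of `∇_X f` and `∇_Y f`. -/
def gradf {n r : ℕ} (Z O : Matrix (Fin n) (Fin n) ℝ) (lam : ℝ)
    (X Y : Matrix (Fin n) (Fin r) ℝ) (τ : ℝ) : Matrix (Fin n ⊕ Fin n) (Fin r) ℝ :=
  Matrix.fromRows (gradX Z O lam X Y τ) (gradY Z O lam X Y τ)

/-- The non-convex objective `f(X,Y;τ)`. -/
def fval {n r : ℕ} (Z O : Matrix (Fin n) (Fin n) ℝ) (lam : ℝ)
    (X Y : Matrix (Fin n) (Fin r) ℝ) (τ : ℝ) : ℝ :=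
  1 / 2 * fnorm (O - X * Yᵀ - τ • Z) ^ 2 + lam / 2 * fnorm X ^ 2 + lam / 2 * fnorm Y ^ 2

/-- Algorithm 1 (alternating gradient descent); `τᵗ` is always `tauOf Z O Xᵗ Yᵗ`. -/
def gdIter {n r : ℕ} (Z O : Matrix (Fin n) (Fin n) ℝ) (lam η : ℝ)
    (X0 Y0 : Matrix (Fin n) (Fin r) ℝ) :
    ℕ → Matrix (Fin n) (Fin r) ℝ × Matrix (Fin n) (Fin r) ℝ
  | 0 => (X0, Y0)
  | t + 1 =>
      let p := gdIter Z O lam η X0 Y0 t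
      let τ := tauOf Z O p.1 p.2
      (p.1 - η • gradX Z O lam p.1 p.2 τ, p.2 - η • gradY Z O lam p.1 p.2 τ)

/-- Vertical stacking `F = [X; Y] ∈ ℝ^{2n×r}`. -/
def stack {n r : ℕ} (X Y : Matrix (Fin n) (Fin r) ℝ) : Matrix (Fin n ⊕ Fin n) (Fin r) ℝ :=
  Matrix.fromRows X Y

/-- `H` is an optimal rotation aligning `F` with `Fstar`:
it is orthogonal and minimizes `‖F R − Fstar‖_F` over orthogonal `R`. -/
def IsMinRot {n r : ℕ} (F Fstar : Matrix (Fin n ⊕ Fin n) (Fin r) ℝ)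
    (H : Matrix (Fin r) (Fin r) ℝ) : Prop :=
  Hᵀ * H = 1 ∧ ∀ R : Matrix (Fin r) (Fin r) ℝ, Rᵀ * R = 1 →
    fnorm (F * H - Fstar) ≤ fnorm (F * R - Fstar)

lemma finner_self_nonneg {m k : Type*} [Fintype m] [Fintype k] (A : Matrix m k ℝ) :
    0 ≤ finner A A := by
  unfold finner Matrix.trace
  refine Finset.sum_nonneg fun j _ => ?_
  simp only [Matrix.diag_apply, Matrix.mul_apply, Matrix.transpose_apply]
  exact Finset.sum_nonneg fun i _ => mul_self_nonneg _

lemma fnorm_sq {m k : Type*} [Fintype m] [Fintype k] (A : Matrix m k ℝ) :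
    fnorm A ^ 2 = finner A A := Real.sq_sqrt (finner_self_nonneg A)

lemma fnorm_nonneg' {m k : Type*} [Fintype m] [Fintype k] (A : Matrix m k ℝ) :
    0 ≤ fnorm A := Real.sqrt_nonneg _

/-- direct implication of the first identification condition. -/
theorem stmt14
    (n r : ℕ) (Z : Matrix (Fin n) (Fin n) ℝ)
    (U V : Matrix (Fin n) (Fin r) ℝ)
    (hU : Uᵀ * U = 1) (hV : Vᵀ * V = 1)
    (η : ℝ) (hη0 : 0 < η) (hη1 : η ≤ 1)
    (h : fnorm (Z * V) ^ 2 + fnorm (Zᵀ * U) ^ 2 ≤ (1 - η) * fnorm Z ^ 2) :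
    fnorm (Uᵀ * Z * V) ^ 2 ≤ fnorm (PTperp U V Z) ^ 2 - η * fnorm Z ^ 2
    ∧ η * fnorm Z ^ 2 ≤ fnorm (PTperp U V Z) ^ 2
    ∧ fnorm (Uᵀ * Z * V) ≤ (1 - η / 2) * fnorm (PTperp U V Z) := by
  set P : Matrix (Fin n) (Fin n) ℝ := U * Uᵀ with hPdef
  set Q : Matrix (Fin n) (Fin n) ℝ := V * Vᵀ with hQdef
  have hPP : P * P = P := by
    rw [hPdef, Matrix.mul_assoc, ← Matrix.mul_assoc Uᵀ, hU, Matrix.one_mul]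
  have hQQ : Q * Q = Q := by
    rw [hQdef, Matrix.mul_assoc, ← Matrix.mul_assoc Vᵀ, hV, Matrix.one_mul]
  set t1 := Matrix.trace (Zᵀ * Z) with ht1
  set t2 := Matrix.trace (Zᵀ * (P * Z)) with ht2
  set t3 := Matrix.trace (Zᵀ * (Z * Q)) with ht3
  set t4 := Matrix.trace (Zᵀ * (P * (Z * Q))) with ht4
  -- ‖Z‖² = t1
  have eZ : fnorm Z ^ 2 = t1 := by rw [fnorm_sq]; rfl
  -- ‖ZV‖² = t3
  have e1 : fnorm (Z * V) ^ 2 = t3 := by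
    rw [fnorm_sq]
    unfold finner
    rw [Matrix.transpose_mul, Matrix.mul_assoc, Matrix.trace_mul_comm]
    simp [Matrix.mul_assoc, ht3, hQdef]
  -- ‖ZᵀU‖² = t2
  have e2 : fnorm (Zᵀ * U) ^ 2 = t2 := by
    rw [fnorm_sq]
    unfold finner
    rw [Matrix.transpose_mul, Matrix.transpose_transpose, Matrix.trace_mul_comm]
    simp [Matrix.mul_assoc, ht2, hPdef]
  -- ‖UᵀZV‖² = t4
  have e3 : fnorm (Uᵀ * Z * V) ^ 2 = t4 := by
    rw [fnorm_sq]
    unfold finner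
    have : (Uᵀ * Z * V)ᵀ * (Uᵀ * Z * V) = Vᵀ * (Zᵀ * (P * (Z * V))) := by
      simp [Matrix.transpose_mul, Matrix.mul_assoc, hPdef]
    rw [this, Matrix.trace_mul_comm]
    simp [Matrix.mul_assoc, ht4, hQdef]
  -- idempotence of complements
  have h1P : (1 - P) * (1 - P) = 1 - P := by
    have : (1 - P) * (1 - P) = 1 - P - P + P * P := by noncomm_ring
    rw [this, hPP]; abel
  have h1Q : (1 - Q) * (1 - Q) = 1 - Q := by
    have : (1 - Q) * (1 - Q) = 1 - Q - Q + Q * Q := by noncomm_ring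
    rw [this, hQQ]; abel
  have hPsym : Pᵀ = P := by rw [hPdef, Matrix.transpose_mul, Matrix.transpose_transpose]
  have hQsym : Qᵀ = Q := by rw [hQdef, Matrix.transpose_mul, Matrix.transpose_transpose]
  have hPP' : ∀ X : Matrix (Fin n) (Fin n) ℝ, P * (P * X) = P * X := fun X => by
    rw [← Matrix.mul_assoc, hPP]
  have hQQ' : ∀ X : Matrix (Fin n) (Fin n) ℝ, Q * (Q * X) = Q * X := fun X => by
    rw [← Matrix.mul_assoc, hQQ]
  -- ‖P_{T⊥}Z‖² = t1 - t2 - t3 + t4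
  have e4 : fnorm (PTperp U V Z) ^ 2 = t1 - t2 - t3 + t4 := by
    rw [fnorm_sq]
    unfold finner PTperp
    have hT : ((1 - P) * Z * (1 - Q))ᵀ = (1 - Q) * (Zᵀ * (1 - P)) := by
      simp [Matrix.transpose_mul, Matrix.transpose_sub, hPsym, hQsym, Matrix.mul_assoc]
    rw [show ((1 - U * Uᵀ) * Z * (1 - V * Vᵀ)) = ((1 - P) * Z * (1 - Q)) from rfl, hT]
    rw [Matrix.mul_assoc (1 - Q), Matrix.trace_mul_comm]
    have key : Zᵀ * (1 - P) * ((1 - P) * Z * (1 - Q)) * (1 - Q)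
        = Zᵀ * Z - Zᵀ * (P * Z) - Zᵀ * (Z * Q) + Zᵀ * (P * (Z * Q)) := by
      simp only [Matrix.mul_sub, Matrix.sub_mul, Matrix.mul_one, Matrix.one_mul,
        Matrix.mul_assoc, hPP, hQQ, hPP', hQQ']
      abel
    rw [key]
    simp only [Matrix.trace_sub, Matrix.trace_add]
    rfl

  -- t2 - t4 = ‖P Z (1-Q)‖_F² ≥ 0
  have e5 : 0 ≤ t2 - t4 := by
    have hnn := finner_self_nonneg (P * (Z * (1 - Q)))
    have key : finner (P * (Z * (1 - Q))) (P * (Z * (1 - Q))) = t2 - t4 := by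
      unfold finner
      have hT : (P * (Z * (1 - Q)))ᵀ = (1 - Q) * (Zᵀ * P) := by
        simp [Matrix.transpose_mul, Matrix.transpose_sub, hPsym, hQsym, Matrix.mul_assoc]
      rw [hT, Matrix.mul_assoc (1 - Q), Matrix.trace_mul_comm]
      have key2 : Zᵀ * P * (P * (Z * (1 - Q))) * (1 - Q)
          = Zᵀ * (P * Z) - Zᵀ * (P * (Z * Q)) := by
        simp only [Matrix.mul_sub, Matrix.sub_mul, Matrix.mul_one, Matrix.one_mul,
          Matrix.mul_assoc, hPP, hQQ, hPP', hQQ']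
        abel
      rw [key2, Matrix.trace_sub, ht2, ht4]
    linarith [key ▸ hnn]
  have e6 : 0 ≤ t3 := e1 ▸ sq_nonneg (fnorm (Z * V))
  have e7 : 0 ≤ t4 := e3 ▸ sq_nonneg (fnorm (Uᵀ * Z * V))
  rw [e1, e2, eZ] at h
  rw [eZ, e3, e4]
  have goal1 : t4 ≤ t1 - t2 - t3 + t4 - η * t1 := by linarith
  refine ⟨goal1, by linarith, ?_⟩
  -- third part
  have hs_nonneg : 0 ≤ t1 - t2 - t3 + t4 := by nlinarith
  have hs_le : t1 - t2 - t3 + t4 ≤ t1 := by linarith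
  have hq : fnorm (Uᵀ * Z * V) ^ 2 ≤ ((1 - η / 2) * fnorm (PTperp U V Z)) ^ 2 := by
    rw [e3, mul_pow, e4]
    nlinarith [sq_nonneg η]
  have h1 : 0 ≤ fnorm (Uᵀ * Z * V) := fnorm_nonneg' _
  have h2 : 0 ≤ (1 - η / 2) * fnorm (PTperp U V Z) := by
    have := fnorm_nonneg' (PTperp U V Z)
    nlinarith
  have := Real.sqrt_le_sqrt hq
  rwa [Real.sqrt_sq h1, Real.sqrt_sq h2] at this

end Paper
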